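/- Let G be a group, H a normal subgroup of G, and a, b ∈ G with the commutator [a, b] := a·b·a⁻¹·b⁻¹ ∈ H. Let M be a positive natural number and let H₀ be a subgroup of G contained in H such that H₀ has index at most M in H and H₀ is characteristic in H (i.e., invariant under every automorphism of the group H). Then for every natural number C with C ≥ 2M, one has [a^{C!}, b] ∈ H₀. -/

import Mathlib

/-- **Proposition (powers).**
Let `G` be a group, `H ⊴ G`, `a b ∈ G` with `[a, b] = a b a⁻¹ b⁻¹ ∈ H`, `M` a
positive natural, and `H₀ ≤ H` a subgroup which is characteristic in `H` and has
index at most `M` in `H`.  Then for every `C ≥ 2M` one has `[a^{C!}, b] ∈ H₀`. -/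
theorem powers_prop (G : Type*) [Group G] (H H₀ : Subgroup G) (hN : H.Normal)
    (a b : G) (hab : a * b * a⁻¹ * b⁻¹ ∈ H)
    (M : ℕ) (hM : 0 < M) (hle : H₀ ≤ H)
    (hidxfin : H₀.relIndex H ≠ 0) (hidx : H₀.relIndex H ≤ M)
    (hchar : (H₀.subgroupOf H).Characteristic) :
    ∀ C : ℕ, 2 * M ≤ C →
      a ^ (Nat.factorial C) * b * (a ^ (Nat.factorial C))⁻¹ * b⁻¹ ∈ H₀ := by
  haveI := hN
  set c : ℕ → G := fun n => a ^ n * b * (a ^ n)⁻¹ * b⁻¹ with hc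
  -- key algebraic identity
  have key : ∀ m n, c (m + n) = a ^ m * c n * (a ^ m)⁻¹ * c m := by
    intro m n
    simp only [hc, pow_add]
    group
  have hcH : ∀ n, c n ∈ H := by
    intro n
    induction n with
    | zero => simpa [hc] using H.one_mem
    | succ k ih =>
      have hk : c (k + 1) = a ^ 1 * c k * (a ^ 1)⁻¹ * c 1 := by
        rw [show k + 1 = 1 + k from Nat.add_comm k 1]; exact key 1 k
      rw [hk]
      exact H.mul_mem (by simpa using hN.conj_mem _ ih a)
        (by simpa [hc] using hab)
  -- conjugation by any element of G preserves H₀ inside H (characteristic)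
  have helper : ∀ (g x : G) (hx : x ∈ H), x ∈ H₀ → g * x * g⁻¹ ∈ H₀ := by
    intro g x hx hx0
    have hmem : (⟨x, hx⟩ : H) ∈ H₀.subgroupOf H := by
      simpa [Subgroup.mem_subgroupOf] using hx0
    have hfix := hchar.fixed (MulAut.conjNormal g : MulAut H)
    rw [← hfix, Subgroup.mem_comap] at hmem
    simpa [Subgroup.mem_subgroupOf, MulAut.conjNormal_apply] using hmem
  have conj_iff : ∀ (g x : G), x ∈ H → (g * x * g⁻¹ ∈ H₀ ↔ x ∈ H₀) := by
    intro g x hx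
    constructor
    · intro h
      have hx' : g * x * g⁻¹ ∈ H := hN.conj_mem x hx g
      have := helper g⁻¹ _ hx' h
      simpa [mul_assoc] using this
    · exact helper g x hx
  -- multiples
  have hmul : ∀ n, c n ∈ H₀ → ∀ k, c (k * n) ∈ H₀ := by
    intro n hn k
    induction k with
    | zero => simpa [hc] using H₀.one_mem
    | succ k ih =>
      have hkey : c ((k + 1) * n) = a ^ (k * n) * c n * (a ^ (k * n))⁻¹ * c (k * n) := by
        rw [show (k + 1) * n = k * n + n by ring]; exact key _ _
      rw [hkey]
      exact H₀.mul_mem ((conj_iff _ _ (hcH n)).mpr hn) ih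
  -- pigeonhole: find n with 1 ≤ n ≤ M and c n ∈ H₀
  have hfin : Finite (H ⧸ H₀.subgroupOf H) := by
    apply Nat.finite_of_card_ne_zero
    simpa [Subgroup.relIndex, Subgroup.index] using hidxfin
  haveI := hfin
  haveI : Fintype (H ⧸ H₀.subgroupOf H) := Fintype.ofFinite _
  obtain ⟨i, j, hij, heq⟩ := Fintype.exists_ne_map_eq_of_card_lt
      (fun i : Fin (M + 1) =>
        (QuotientGroup.mk (⟨c i, hcH i⟩ : H) : H ⧸ H₀.subgroupOf H))
      (by
        have : Nat.card (H ⧸ H₀.subgroupOf H) ≤ M := by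
          simpa [Subgroup.relIndex, Subgroup.index] using hidx
        have := Nat.card_eq_fintype_card (α := H ⧸ H₀.subgroupOf H) ▸ this
        simpa using lt_of_le_of_lt this (Nat.lt_succ_self M))
  -- from equal cosets get c (j - i) ∈ H₀ (wlog i < j)
  have main : ∀ i j : Fin (M + 1), (i : ℕ) < (j : ℕ) →
      (QuotientGroup.mk (⟨c i, hcH i⟩ : H) : H ⧸ H₀.subgroupOf H)
        = QuotientGroup.mk (⟨c j, hcH j⟩ : H) →
      c ((j : ℕ) - (i : ℕ)) ∈ H₀ := by
    intro i j hlt heq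
    rw [QuotientGroup.eq] at heq
    have h0 : (c i)⁻¹ * c j ∈ H₀ := by
      simpa [Subgroup.mem_subgroupOf] using heq
    set n : ℕ := (j : ℕ) - (i : ℕ) with hn
    have hjn : c j = a ^ (i : ℕ) * c n * (a ^ (i : ℕ))⁻¹ * c i := by
      have : (i : ℕ) + n = (j : ℕ) := by omega
      rw [← this]; exact key _ _
    set y : G := a ^ (i : ℕ) * c n * (a ^ (i : ℕ))⁻¹ with hy
    have hyH : y ∈ H := hN.conj_mem _ (hcH n) _
    have h1 : (c i)⁻¹ * y * ((c i)⁻¹)⁻¹ ∈ H₀ := by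
      have : (c i)⁻¹ * y * ((c i)⁻¹)⁻¹ = (c i)⁻¹ * c j := by
        rw [hjn]; group
      rw [this]; exact h0
    have h2 : y ∈ H₀ := (conj_iff _ _ hyH).mp h1
    exact (conj_iff _ _ (hcH n)).mp h2
  -- get the good n
  have hgood : ∃ n, 1 ≤ n ∧ n ≤ M ∧ c n ∈ H₀ := by
    rcases lt_or_gt_of_ne (fun h => hij (by exact_mod_cast Fin.ext (by exact_mod_cast congrArg Fin.val h))) with h | h
    · exact ⟨(j : ℕ) - (i : ℕ), by omega, by have := j.isLt; omega, main i j h heq⟩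
    · exact ⟨(i : ℕ) - (j : ℕ), by omega, by have := i.isLt; omega, main j i h heq.symm⟩
  obtain ⟨n, hn1, hnM, hn0⟩ := hgood
  intro C hC
  have hdvd : n ∣ Nat.factorial C := Nat.dvd_factorial hn1 (by omega)
  obtain ⟨k, hk⟩ := hdvd
  have : c (Nat.factorial C) ∈ H₀ := by
    rw [hk, Nat.mul_comm]; exact hmul n hn0 k
  simpa [hc] using this
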